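/- Every connected Cayley graph over a finite Abelian group with n generators is isomorphic to the graph G(M) = Cay(Z^n / M Z^n ; ±B_n) for some non-singular integer matrix M of size n×n, where B_n = {e_1,...,e_n} is the standard basis. -/

import Mathlib

open Matrix Polynomial

abbrev Zq {n : ℕ} (M : Matrix (Fin n) (Fin n) ℤ) : Type :=
  (Fin n → ℤ) ⧸ LinearMap.range M.mulVecLin

def qk {n : ℕ} (M : Matrix (Fin n) (Fin n) ℤ) (v : Fin n → ℤ) : Zq M :=
  Submodule.Quotient.mk v

/-- The Cayley graph `G(M)` on `ℤⁿ/Mℤⁿ` with connection set `±B_n`. -/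
def GM {n : ℕ} (M : Matrix (Fin n) (Fin n) ℤ) : SimpleGraph (Zq M) :=
  SimpleGraph.fromRel fun v w => ∃ i : Fin n, w - v = qk M (Pi.single i 1)

/-- The connection set `±B_n` inside the quotient group. -/
def genSet {n : ℕ} (M : Matrix (Fin n) (Fin n) ℤ) : Set (Zq M) :=
  {x | ∃ i : Fin n, x = qk M (Pi.single i 1) ∨ x = -qk M (Pi.single i 1)}

def NoNontrivial4Cycles {n : ℕ} (M : Matrix (Fin n) (Fin n) ℤ) : Prop :=
  ∀ a b c d : Zq M, a ∈ genSet M → b ∈ genSet M → c ∈ genSet M → d ∈ genSet M →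
    a + b + c + d = 0 → a = -b ∨ a = -c ∨ a = -d

def IsSignedPerm {n : ℕ} (P : Matrix (Fin n) (Fin n) ℤ) : Prop :=
  ∃ (σ : Equiv.Perm (Fin n)) (ε : Fin n → ℤ), (∀ i, ε i = 1 ∨ ε i = -1) ∧
    ∀ i j, P i j = if i = σ j then ε j else 0

def SimilarInt {n : ℕ} (A B : Matrix (Fin n) (Fin n) ℤ) : Prop :=
  ∃ U : Matrix (Fin n) (Fin n) ℤ, IsUnit U.det ∧ A * U = U * B

/-- An undirected Cayley graph over an abelian group with generators `g 0, …, g (n-1)`. -/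
def cayley {n : ℕ} (Γ : Type) [AddCommGroup Γ] (g : Fin n → Γ) : SimpleGraph Γ :=
  SimpleGraph.fromRel fun x y => ∃ i : Fin n, y - x = g i

theorem stmt_0 {n : ℕ} (Γ : Type) [AddCommGroup Γ] [Fintype Γ] (g : Fin n → Γ)
    (hconn : (cayley Γ g).Connected) :
    ∃ M : Matrix (Fin n) (Fin n) ℤ, M.det ≠ 0 ∧ Nonempty (cayley Γ g ≃g GM M) := by
  classical
  obtain ⟨φ, hsingle⟩ : ∃ φ : (Fin n → ℤ) →ₗ[ℤ] Γ, ∀ i, φ (Pi.single i 1) = g i := by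
    refine ⟨{ toFun := fun v => ∑ i, v i • g i,
              map_add' := ?_, map_smul' := ?_ }, ?_⟩
    · intro x y; simp [add_smul, Finset.sum_add_distrib]
    · intro c x; simp [Finset.smul_sum, smul_smul]
    · intro i; simp [Pi.single_apply]
  -- surjectivity from connectedness
  have hsurj : Function.Surjective φ := by
    intro x
    have hstep : ∀ (a b : Γ), (cayley Γ g).Walk a b →
        a ∈ LinearMap.range φ → b ∈ LinearMap.range φ := by
      intro a b w
      induction w with
      | nil => exact id
      | @cons u v _ h _ ih =>
        intro hu
        apply ih
        rw [cayley, SimpleGraph.fromRel_adj] at h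
        obtain ⟨-, h | h⟩ := h <;> obtain ⟨i, hi⟩ := h
        · have : v = u + φ (Pi.single i 1) := by rw [hsingle i, ← hi]; abel
          rw [this]; exact add_mem hu (LinearMap.mem_range_self _ _)
        · have : v = u - φ (Pi.single i 1) := by rw [hsingle i, ← hi]; abel
          rw [this]; exact sub_mem hu (LinearMap.mem_range_self _ _)
    obtain ⟨w⟩ := hconn 0 x
    obtain ⟨v, hv⟩ := hstep 0 x w ⟨0, by simp⟩
    exact ⟨v, hv⟩
  set K := LinearMap.ker φ with hK
  -- kernel has full rank
  set N : ℤ := (Fintype.card Γ : ℤ) with hNdef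
  have hNne : N ≠ 0 := by
    simp [hNdef, Fintype.card_ne_zero]
  have hmem : ∀ v : Fin n → ℤ, (N • v) ∈ K := by
    intro v
    rw [hK, LinearMap.mem_ker, _root_.map_smul, hNdef, natCast_zsmul]
    exact card_nsmul_eq_zero
  have hfr : Module.finrank ℤ K = n := by
    have h1 : Module.finrank ℤ K ≤ n := by
      have := Submodule.finrank_le K
      simpa using this
    have h2 : n ≤ Module.finrank ℤ K := by
      let L : (Fin n → ℤ) →ₗ[ℤ] K :=
        LinearMap.codRestrict K (N • LinearMap.id) hmem
      have hinj : Function.Injective L := by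
        intro v w hvw
        have : N • v = N • w := congrArg Subtype.val hvw
        exact smul_right_injective _ hNne this
      have := LinearMap.finrank_le_finrank_of_injective hinj
      simpa using this
    exact le_antisymm h1 h2
  -- choose a basis of K indexed by Fin n
  have hcard : Fintype.card (Module.Free.ChooseBasisIndex ℤ K) = n := by
    rw [← Module.finrank_eq_card_chooseBasisIndex]; exact hfr
  let b : Module.Basis (Fin n) ℤ K :=
    (Module.Free.chooseBasis ℤ K).reindex (Fintype.equivFinOfCardEq hcard)
  set M : Matrix (Fin n) (Fin n) ℤ := Matrix.of (fun i j => (b j : Fin n → ℤ) i) with hM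
  have hmv : ∀ v : Fin n → ℤ, M.mulVec v = ((∑ j, v j • b j : K) : Fin n → ℤ) := by
    intro v; funext i
    simp [hM, Matrix.mulVec, dotProduct, mul_comm]
  have hrange : LinearMap.range M.mulVecLin = K := by
    apply le_antisymm
    · rintro x ⟨v, rfl⟩
      rw [Matrix.mulVecLin_apply, hmv]
      exact (∑ j, v j • b j).2
    · intro x hx
      refine ⟨b.equivFun ⟨x, hx⟩, ?_⟩
      rw [Matrix.mulVecLin_apply, hmv]
      have : (∑ j, b.equivFun ⟨x, hx⟩ j • b j : K) = ⟨x, hx⟩ := b.sum_equivFun ⟨x, hx⟩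
      rw [this]
  have hdet : M.det ≠ 0 := by
    intro h
    obtain ⟨v, hv0, hv⟩ := Matrix.exists_mulVec_eq_zero_iff.mpr h
    rw [hmv] at hv
    have h1 : (∑ j, v j • b j : K) = 0 := by exact_mod_cast Subtype.ext hv
    have h2 : b.equivFun.symm v = 0 := by
      rw [Module.Basis.equivFun_symm_apply]; exact h1
    exact hv0 (b.equivFun.symm.injective (by rw [h2, map_zero]))
  -- the quotient iso
  have hle : LinearMap.range M.mulVecLin ≤ K := le_of_eq hrange
  let π : Zq M →ₗ[ℤ] Γ := Submodule.liftQ _ φ hle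
  have hπ : ∀ v, π (qk M v) = φ v := fun v => rfl
  have hbij : Function.Bijective π := by
    constructor
    · rw [← LinearMap.ker_eq_bot]
      exact Submodule.ker_liftQ_eq_bot _ _ _ (le_of_eq hrange.symm)
    · intro x
      obtain ⟨v, hv⟩ := hsurj x
      exact ⟨qk M v, by rw [hπ, hv]⟩
  let ψ : Zq M ≃ₗ[ℤ] Γ := LinearEquiv.ofBijective π hbij
  have hψ : ∀ v, ψ (qk M v) = φ v := fun v => rfl
  have key : ∀ (u w : Γ) (i : Fin n),
      ψ.symm w - ψ.symm u = qk M (Pi.single i 1) ↔ w - u = g i := by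
    intro u w i
    constructor
    · intro h
      have := congrArg ψ h
      rw [map_sub, LinearEquiv.apply_symm_apply, LinearEquiv.apply_symm_apply,
        hψ, hsingle] at this
      exact this
    · intro h
      apply ψ.injective
      rw [map_sub, LinearEquiv.apply_symm_apply, LinearEquiv.apply_symm_apply,
        hψ, hsingle]
      exact h
  refine ⟨M, hdet, ⟨⟨ψ.symm.toEquiv, ?_⟩⟩⟩
  intro x y
  show (GM M).Adj (ψ.symm x) (ψ.symm y) ↔ (cayley Γ g).Adj x y
  rw [GM, cayley, SimpleGraph.fromRel_adj, SimpleGraph.fromRel_adj]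
  constructor
  · rintro ⟨hne, h | h⟩ <;> obtain ⟨i, hi⟩ := h
    · exact ⟨fun hxy => hne (by rw [hxy]), Or.inl ⟨i, (key x y i).mp hi⟩⟩
    · exact ⟨fun hxy => hne (by rw [hxy]), Or.inr ⟨i, (key y x i).mp hi⟩⟩
  · rintro ⟨hne, h | h⟩ <;> obtain ⟨i, hi⟩ := h
    · exact ⟨fun hxy => hne (ψ.symm.injective hxy), Or.inl ⟨i, (key x y i).mpr hi⟩⟩
    · exact ⟨fun hxy => hne (ψ.symm.injective hxy), Or.inr ⟨i, (key y x i).mpr hi⟩⟩
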